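/- For a subset C ⊆ ℝmax^n the following are equivalent: (1) C is max-plus convex and closed in the product topology of ℝmax^n; (2) C is U-convex for the set U of residuated differences of max-plus affine functions, i.e., for every y ∈ ℝmax^n with y ∉ C there exist w', w'' ∈ ℝmax^n and d', d'' ∈ ℝmax such that, setting u(x) := max(⟨w', x⟩, d') ⊖ max(⟨w'', x⟩, d''), one has u(y) > sup over x ∈ C of u(x). -/

import Mathlib

noncomputable section

/-- `ℝmax = ℝ ∪ {-∞}`, the max-plus semifield. -/
abbrev Rmax := WithBot ℝ

/-- the order topology on `ℝmax`. -/
noncomputable instance : TopologicalSpace Rmax := Preorder.topology Rmax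
instance : OrderTopology Rmax := ⟨rfl⟩

/-- the embedding of `ℝmax = ℝ ∪ {-∞}` into `ℝ̄ = [-∞,+∞]`. -/
def Rmax.toE : Rmax → EReal := WithBot.recBotCoe ⊥ (fun r : ℝ => (r : EReal))

/-- max-plus scalar product `⟨w,x⟩ = max_i (w_i + x_i)` on `ℝmax^n`. -/
def mdot {n : ℕ} (w x : Fin n → Rmax) : Rmax := Finset.univ.sup fun i => w i + x i

/-- residuated difference: `a ⊖ b = a` if `a > b`, and `-∞` otherwise. -/
def rdiff (a b : Rmax) : Rmax := if b < a then a else ⊥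

/-- max-plus convexity of a subset of `ℝmax^n`. -/
def MPConvex {n : ℕ} (C : Set (Fin n → Rmax)) : Prop :=
  ∀ x ∈ C, ∀ y ∈ C, ∀ α β : Rmax, max α β = 0 →
    (fun i => max (α + x i) (β + y i)) ∈ C

/-! ### Basic facts about `Rmax` -/

namespace RmaxAux

lemma toE_bot : Rmax.toE ⊥ = ⊥ := rfl
lemma toE_coe (r : ℝ) : Rmax.toE (r : Rmax) = (r : EReal) := rfl

lemma toE_mono : Monotone Rmax.toE := by
  intro a b h
  induction a with
  | none => exact bot_le
  | some r =>
    induction b with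
    | none => exact absurd h (WithBot.not_coe_le_bot r)
    | some s =>
      rw [show ((some r : Rmax)) = ((r:ℝ) : Rmax) from rfl,
        show ((some s : Rmax)) = ((s:ℝ) : Rmax) from rfl, toE_coe, toE_coe]
      exact_mod_cast (WithBot.coe_le_coe.1 h)

lemma toE_le_coe_iff {a : Rmax} {r : ℝ} : Rmax.toE a ≤ (r : EReal) ↔ a ≤ (r : Rmax) := by
  induction a with
  | none => simp [WithBot.none_eq_bot, toE_bot]
  | some s =>
    rw [show ((some s : Rmax)) = ((s:ℝ) : Rmax) from rfl, toE_coe]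
    constructor
    · intro h; exact_mod_cast h
    · intro h; exact_mod_cast h

lemma toE_eq_bot_iff {a : Rmax} : Rmax.toE a = (⊥ : EReal) ↔ a = ⊥ := by
  induction a with
  | none => simp [WithBot.none_eq_bot, toE_bot]
  | some s =>
    rw [show ((some s : Rmax)) = ((s:ℝ) : Rmax) from rfl, toE_coe]
    simp

lemma toE_le_bot_iff {a : Rmax} : Rmax.toE a ≤ (⊥ : EReal) ↔ a = ⊥ := by
  induction a with
  | none => simp [WithBot.none_eq_bot, toE_bot]
  | some s =>
    rw [show ((some s : Rmax)) = ((s:ℝ) : Rmax) from rfl, toE_coe]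
    simp

lemma add_max (a b c : Rmax) : a + max b c = max (a + b) (a + c) := by
  rcases le_total b c with h | h
  · rw [max_eq_right h, max_eq_right (add_le_add_right h a)]
  · rw [max_eq_left h, max_eq_left (add_le_add_right h a)]

lemma max_add (a b c : Rmax) : max a b + c = max (a + c) (b + c) := by
  rw [add_comm, add_max, add_comm c a, add_comm c b]

lemma ne_bot_of_gt {a b : Rmax} (h : b < a) : a ≠ ⊥ := by
  rintro rfl; exact absurd h (by simp)

lemma add_ne_bot_left {a b : Rmax} (h : a + b ≠ ⊥) : a ≠ ⊥ := by
  rintro rfl; simp at h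

lemma add_ne_bot_right {a b : Rmax} (h : a + b ≠ ⊥) : b ≠ ⊥ := by
  rintro rfl; simp at h

/-- the order isomorphism `Rmax ≃o ℝ≥0`, `x ↦ exp x`. -/
def ee : Rmax → NNReal := fun x => x.recBotCoe 0 (fun r => (Real.exp r).toNNReal)

lemma ee_bot : ee ⊥ = 0 := rfl
lemma ee_coe (r : ℝ) : ee (r : Rmax) = (Real.exp r).toNNReal := rfl

lemma ee_strictMono : StrictMono ee := by
  intro a b hab
  induction b with
  | none => exact absurd hab not_lt_bot
  | some r =>
    induction a with
    | none =>
      show ee ⊥ < ee (r : Rmax)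
      rw [ee_bot, ee_coe]
      exact Real.toNNReal_pos.2 (Real.exp_pos r)
    | some s =>
      show ee (s : Rmax) < ee (r : Rmax)
      rw [ee_coe, ee_coe, Real.toNNReal_lt_toNNReal_iff (Real.exp_pos r)]
      exact Real.exp_lt_exp.2 (WithBot.coe_lt_coe.1 hab)

lemma ee_surj : Function.Surjective ee := by
  intro p
  rcases eq_or_lt_of_le p.2 with h | h
  · refine ⟨⊥, ?_⟩
    rw [ee_bot]; exact (NNReal.coe_eq_zero.1 h.symm).symm
  · refine ⟨(Real.log p : ℝ), ?_⟩
    rw [ee_coe, Real.exp_log (by exact_mod_cast h)]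
    exact Real.toNNReal_coe

def eIso : Rmax ≃o NNReal := StrictMono.orderIsoOfSurjective ee ee_strictMono ee_surj

def eHomeo : Rmax ≃ₜ NNReal := eIso.toHomeomorph

instance : CompactIccSpace Rmax := by
  constructor
  intro a b
  have h : Set.Icc a b = eHomeo ⁻¹' (Set.Icc (eIso a) (eIso b)) := by
    ext x
    simp only [Set.mem_Icc, Set.mem_preimage]
    constructor
    · rintro ⟨h1, h2⟩
      exact ⟨eIso.monotone h1, eIso.monotone h2⟩
    · rintro ⟨h1, h2⟩
      exact ⟨eIso.le_iff_le.1 h1, eIso.le_iff_le.1 h2⟩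
  rw [h]
  exact eHomeo.isCompact_preimage.2 isCompact_Icc

/-- supremum in `Rmax`, computed through `eIso`. -/
def RSup (s : Set Rmax) : Rmax := eIso.symm (sSup (eIso '' s))

lemma le_RSup {s : Set Rmax} {a b : Rmax} (hb : ∀ c ∈ s, c ≤ b) (h : a ∈ s) :
    a ≤ RSup s := by
  have h1 : eIso a ≤ sSup (eIso '' s) := by
    apply le_csSup
    · exact ⟨eIso b, by rintro _ ⟨c, hc, rfl⟩; exact eIso.monotone (hb c hc)⟩
    · exact ⟨a, h, rfl⟩
  have := eIso.symm.monotone h1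
  rwa [eIso.symm_apply_apply] at this

lemma RSup_le {s : Set Rmax} {b : Rmax} (hne : s.Nonempty) (h : ∀ a ∈ s, a ≤ b) :
    RSup s ≤ b := by
  have h1 : sSup (eIso '' s) ≤ eIso b := by
    apply csSup_le (hne.image _)
    rintro _ ⟨c, hc, rfl⟩; exact eIso.monotone (h c hc)
  have := eIso.symm.monotone h1
  rwa [eIso.symm_apply_apply] at this

lemma exists_lt_of_lt_RSup {s : Set Rmax} {b : Rmax} (h : b < RSup s) :
    ∃ a ∈ s, b < a := by
  rcases s.eq_empty_or_nonempty with rfl | hne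
  · exfalso
    have hb : RSup (∅ : Set Rmax) = ⊥ := by
      rw [RSup, Set.image_empty, csSup_empty]
      exact eIso.symm.map_bot
    rw [hb] at h
    exact absurd h (by simp)
  · have h1 : eIso b < sSup (eIso '' s) := by
      have := eIso.strictMono h
      rwa [RSup, eIso.apply_symm_apply] at this
    obtain ⟨_, ⟨a, ha, rfl⟩, hlt⟩ := exists_lt_of_lt_csSup (hne.image _) h1
    exact ⟨a, ha, eIso.lt_iff_lt.1 hlt⟩

/-! ### continuity -/

def addIso (c : ℝ) : Rmax ≃o Rmax where
  toFun a := (c : Rmax) + a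
  invFun a := (-c : ℝ) + a
  left_inv a := by
    induction a with
    | none => show (((-c:ℝ)) : Rmax) + ((c:Rmax) + ⊥) = ⊥; simp
    | some r =>
      show (((-c:ℝ)) : Rmax) + ((c:Rmax) + (r:Rmax)) = (r:Rmax)
      rw [← WithBot.coe_add, ← WithBot.coe_add]; norm_num
  right_inv a := by
    induction a with
    | none => show ((c:ℝ) : Rmax) + (((-c:ℝ):Rmax) + ⊥) = ⊥; simp
    | some r =>
      show ((c:ℝ) : Rmax) + (((-c:ℝ):Rmax) + (r:Rmax)) = (r:Rmax)
      rw [← WithBot.coe_add, ← WithBot.coe_add]; norm_num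
  map_rel_iff' := by
    intro a b
    exact WithBot.add_le_add_iff_left (x := ((c:ℝ):Rmax)) WithBot.coe_ne_bot

lemma continuous_const_add (c : Rmax) : Continuous (fun a : Rmax => c + a) := by
  induction c with
  | none => show Continuous (fun a : Rmax => (⊥:Rmax) + a); simpa using continuous_const
  | some r => exact (addIso r).toHomeomorph.continuous

lemma continuous_mdot {n : ℕ} (w : Fin n → Rmax) :
    Continuous (fun x : Fin n → Rmax => mdot w x) := by
  unfold mdot
  induction (Finset.univ : Finset (Fin n)) using Finset.cons_induction with
  | empty => simpa using continuous_const
  | cons i s hi ih =>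
    simp only [Finset.sup_cons]
    exact Continuous.max ((continuous_const_add (w i)).comp (continuous_apply i)) ih

lemma continuous_affine {n : ℕ} (w : Fin n → Rmax) (d : Rmax) :
    Continuous (fun x : Fin n → Rmax => max (mdot w x) d) :=
  (continuous_mdot w).max continuous_const


/-! ### the `λ` functional -/

variable {n : ℕ}

def Rneg : Rmax → Rmax := WithBot.map Neg.neg
lemma Rneg_coe (r : ℝ) : Rneg (r : Rmax) = ((-r : ℝ) : Rmax) := rfl
lemma Rneg_bot : Rneg ⊥ = ⊥ := rfl

def bnd (y x : Fin n → Rmax) (i : Fin n) : Rmax :=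
  if x i = ⊥ then 0 else y i + Rneg (x i)

def lam (y x : Fin n → Rmax) : Rmax := Finset.univ.fold min 0 (bnd y x)

variable {y x : Fin n → Rmax}

lemma lam_le_zero : lam y x ≤ 0 := Finset.fold_min_le 0 |>.2 (Or.inl le_rfl)

lemma lam_le_bnd (i : Fin n) : lam y x ≤ bnd y x i :=
  Finset.fold_min_le _ |>.2 (Or.inr ⟨i, Finset.mem_univ i, le_rfl⟩)

lemma lam_add_le (i : Fin n) : lam y x + x i ≤ y i := by
  by_cases hxi : x i = ⊥
  · rw [hxi, WithBot.add_bot]; exact bot_le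
  · have h1 := lam_le_bnd (y := y) (x := x) i
    rw [bnd, if_neg hxi] at h1
    lift x i to ℝ using hxi with r hr
    by_cases hyi : y i = ⊥
    · rw [hyi, Rneg_coe, WithBot.bot_add, le_bot_iff] at h1
      rw [hyi, h1, WithBot.bot_add]
    · lift y i to ℝ using hyi with s hs
      rw [Rneg_coe, ← WithBot.coe_add] at h1
      calc lam y x + (r : Rmax) ≤ ((s + -r : ℝ) : Rmax) + (r : Rmax) :=
            add_le_add_left h1 _
        _ = ((s : ℝ) : Rmax) := by rw [← WithBot.coe_add]; norm_num

lemma le_lam {l : Rmax} (hl : l ≤ 0) (h : ∀ i, l + x i ≤ y i) : l ≤ lam y x := by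
  refine Finset.le_fold_min _ |>.2 ⟨hl, fun i _ => ?_⟩
  rw [bnd]
  by_cases hxi : x i = ⊥
  · rw [if_pos hxi]; exact hl
  · rw [if_neg hxi]
    have hi := h i
    lift x i to ℝ using hxi with r hr
    by_cases hyi : y i = ⊥
    · rw [hyi, le_bot_iff] at hi
      have hlb : l = ⊥ := by
        by_contra hlne
        lift l to ℝ using hlne with t
        rw [← WithBot.coe_add] at hi
        exact WithBot.coe_ne_bot hi
      rw [hlb]
      exact bot_le
    · lift y i to ℝ using hyi with s hs
      rw [Rneg_coe, ← WithBot.coe_add]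
      induction l with
      | none => exact bot_le
      | some t =>
        rw [show (some t : Rmax) = ((t:ℝ):Rmax) from rfl] at hi ⊢
        rw [← WithBot.coe_add] at hi
        have h2 : t + r ≤ s := WithBot.coe_le_coe.1 hi
        exact WithBot.coe_le_coe.2 (by linarith)

lemma lam_ne_bot (h : ∀ i, y i = ⊥ → x i = ⊥) : lam y x ≠ ⊥ := by
  have : (⊥ : Rmax) < lam y x := by
    refine Finset.lt_fold_min _ |>.2 ⟨by exact_mod_cast WithBot.bot_lt_coe (0:ℝ), fun i _ => ?_⟩
    rw [bnd]
    by_cases hxi : x i = ⊥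
    · rw [if_pos hxi]; exact_mod_cast WithBot.bot_lt_coe (0:ℝ)
    · rw [if_neg hxi]
      have hyi : y i ≠ ⊥ := fun hy => hxi (h i hy)
      lift x i to ℝ using hxi with r
      lift y i to ℝ using hyi with s
      rw [Rneg_coe, ← WithBot.coe_add]
      exact WithBot.bot_lt_coe _
  exact this.ne'

lemma nonesc_of_lam_ne_bot (h : lam y x ≠ ⊥) (i : Fin n) (hy : y i = ⊥) : x i = ⊥ := by
  by_contra hxi
  have h1 := lam_le_bnd (y := y) (x := x) i
  rw [bnd, if_neg hxi, hy, WithBot.bot_add, le_bot_iff] at h1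
  exact h h1

lemma exists_bnd_le {c : Rmax} (h : lam y x ≤ c) (hc : c < 0) :
    ∃ i, x i ≠ ⊥ ∧ y i + Rneg (x i) ≤ c := by
  rcases Finset.fold_min_le _ |>.1 h with h0 | ⟨i, _, hi⟩
  · exact absurd (lt_of_le_of_lt h0 hc) (lt_irrefl _)
  · rw [bnd] at hi
    by_cases hxi : x i = ⊥
    · rw [if_pos hxi] at hi
      exact absurd (lt_of_le_of_lt hi hc) (lt_irrefl _)
    · rw [if_neg hxi] at hi
      exact ⟨i, hxi, hi⟩

/-! ### `mdot` facts -/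

lemma mdot_bot (x : Fin n → Rmax) : mdot (fun _ => ⊥) x = ⊥ := by
  simp [mdot]

lemma le_mdot (w x : Fin n → Rmax) (i : Fin n) : w i + x i ≤ mdot w x := by
  exact Finset.le_sup (f := fun i => w i + x i) (Finset.mem_univ i)

lemma mdot_le_iff {w x : Fin n → Rmax} {c : Rmax} :
    mdot w x ≤ c ↔ ∀ i, w i + x i ≤ c := by
  rw [mdot, Finset.sup_le_iff]
  exact ⟨fun h i => h i (Finset.mem_univ i), fun h i _ => h i⟩

lemma mdot_single (j : Fin n) (c : Rmax) (x : Fin n → Rmax) :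
    mdot (fun i => if i = j then c else ⊥) x = c + x j := by
  apply le_antisymm
  · rw [mdot_le_iff]
    intro i
    by_cases hij : i = j
    · subst hij; rw [if_pos rfl]
    · rw [if_neg hij, WithBot.bot_add]; exact bot_le
  · have := le_mdot (fun i => if i = j then c else ⊥) x j
    rwa [if_pos rfl] at this

/-! ### `μ` and `ν` -/

def muC (C : Set (Fin n → Rmax)) (y : Fin n → Rmax) : Rmax :=
  RSup ((fun x => lam y x) '' C)

def nuC (C : Set (Fin n → Rmax)) (y : Fin n → Rmax) (j : Fin n) : Rmax :=
  RSup ((fun x => lam y x + x j) '' C)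

variable {C : Set (Fin n → Rmax)}

lemma lam_le_muC {x : Fin n → Rmax} (hx : x ∈ C) : lam y x ≤ muC C y :=
  le_RSup (by rintro _ ⟨z, hz, rfl⟩; exact lam_le_zero) ⟨x, hx, rfl⟩

lemma muC_le_zero (hC : C.Nonempty) : muC C y ≤ 0 :=
  RSup_le (hC.image _) (by rintro _ ⟨z, hz, rfl⟩; exact lam_le_zero)

lemma lam_add_le_nuC {x : Fin n → Rmax} (hx : x ∈ C) (j : Fin n) :
    lam y x + x j ≤ nuC C y j :=
  le_RSup (b := y j) (by rintro _ ⟨z, hz, rfl⟩; exact lam_add_le j) ⟨x, hx, rfl⟩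

lemma nuC_le_y (hC : C.Nonempty) (j : Fin n) : nuC C y j ≤ y j :=
  RSup_le (hC.image _) (by rintro _ ⟨z, hz, rfl⟩; exact lam_add_le j)


/-! ### combination lemmas (convexity direction) -/

lemma mdot_combo {w x y' : Fin n → Rmax} {α β : Rmax} :
    mdot w (fun i => max (α + x i) (β + y' i)) = max (α + mdot w x) (β + mdot w y') := by
  unfold mdot
  have h1 : (fun i : Fin n => w i + max (α + x i) (β + y' i))
      = (fun i : Fin n => α + (w i + x i)) ⊔ (fun i : Fin n => β + (w i + y' i)) := by
    funext i
    rw [add_max]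
    show max (w i + (α + x i)) (w i + (β + y' i)) = max (α + (w i + x i)) (β + (w i + y' i))
    rw [add_left_comm (w i) α, add_left_comm (w i) β]
  rw [h1, Finset.sup_sup]
  congr 1
  · exact (Finset.comp_sup_eq_sup_comp (fun a => α + a) (fun a b => add_max α a b)
      (by simp)).symm
  · exact (Finset.comp_sup_eq_sup_comp (fun a => β + a) (fun a b => add_max β a b)
      (by simp)).symm

lemma affine_combo {w x y' : Fin n → Rmax} {α β d : Rmax} (hab : max α β = 0) :
    max (mdot w (fun i => max (α + x i) (β + y' i))) d
      = max (α + max (mdot w x) d) (β + max (mdot w y') d) := by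
  rw [mdot_combo, add_max, add_max, max_max_max_comm]
  have hd : max (α + d) (β + d) = d := by rw [← max_add, hab, zero_add]
  rw [hd]

lemma rdiff_combo_le {a1 a2 b1 b2 α β : Rmax} (hα : α ≤ 0) (hβ : β ≤ 0) :
    rdiff (max (α + a1) (β + a2)) (max (α + b1) (β + b2))
      ≤ max (rdiff a1 b1) (rdiff a2 b2) := by
  rcases lt_or_ge (max (α + b1) (β + b2)) (max (α + a1) (β + a2)) with h | h
  · rw [rdiff, if_pos h]
    rcases le_total (α + a1) (β + a2) with hc | hc
    · rw [max_eq_right hc] at h ⊢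
      have hne : β ≠ ⊥ := add_ne_bot_left (ne_bot_of_gt h)
      have hb2 : b2 < a2 :=
        (WithBot.add_lt_add_iff_left hne).1 (lt_of_le_of_lt (le_max_right _ _) h)
      have ha2 : β + a2 ≤ a2 := by
        calc β + a2 ≤ 0 + a2 := add_le_add_left hβ _
          _ = a2 := zero_add a2
      have hr2 : rdiff a2 b2 = a2 := by rw [rdiff, if_pos hb2]
      refine le_trans ha2 ?_
      rw [hr2]
      exact le_max_right _ _
    · rw [max_eq_left hc] at h ⊢
      have hne : α ≠ ⊥ := add_ne_bot_left (ne_bot_of_gt h)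
      have hb1 : b1 < a1 :=
        (WithBot.add_lt_add_iff_left hne).1 (lt_of_le_of_lt (le_max_left _ _) h)
      have ha1 : α + a1 ≤ a1 := by
        calc α + a1 ≤ 0 + a1 := add_le_add_left hα _
          _ = a1 := zero_add a1
      have hr1 : rdiff a1 b1 = a1 := by rw [rdiff, if_pos hb1]
      refine le_trans ha1 ?_
      rw [hr1]
      exact le_max_left _ _
  · rw [rdiff, if_neg (not_lt.2 h)]
    exact bot_le

/-! ### closedness direction -/

lemma isClosed_toE_le (A : (Fin n → Rmax) → Rmax) (hA : Continuous A) (S : EReal) :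
    IsClosed {x | Rmax.toE (A x) ≤ S} := by
  induction S using EReal.rec with
  | bot =>
    have he : {x | Rmax.toE (A x) ≤ ⊥} = {x | A x ≤ ⊥} := by
      ext x; simp only [Set.mem_setOf_eq, le_bot_iff, toE_eq_bot_iff]
    rw [he]
    exact isClosed_le hA continuous_const
  | coe r =>
    have he : {x | Rmax.toE (A x) ≤ (r : EReal)} = {x | A x ≤ (r : Rmax)} := by
      ext x; simp only [Set.mem_setOf_eq, toE_le_coe_iff]
    rw [he]
    exact isClosed_le hA continuous_const
  | top =>
    have he : {x : Fin n → Rmax | Rmax.toE (A x) ≤ (⊤ : EReal)} = Set.univ := by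
      ext x; simp
    rw [he]
    exact isClosed_univ

lemma isClosed_sep_sublevel (w' w'' : Fin n → Rmax) (d' d'' : Rmax) (S : EReal) :
    IsClosed {x : Fin n → Rmax |
      Rmax.toE (rdiff (max (mdot w' x) d') (max (mdot w'' x) d'')) ≤ S} := by
  have heq : {x : Fin n → Rmax |
        Rmax.toE (rdiff (max (mdot w' x) d') (max (mdot w'' x) d'')) ≤ S}
      = {x | max (mdot w' x) d' ≤ max (mdot w'' x) d''}
        ∪ {x | Rmax.toE (max (mdot w' x) d') ≤ S} := by
    ext x
    simp only [Set.mem_setOf_eq, Set.mem_union]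
    unfold rdiff
    split_ifs with h
    · exact ⟨fun h' => Or.inr h',
        fun h' => h'.elim (fun hle => absurd h (not_lt.2 hle)) id⟩
    · rw [toE_bot]
      exact ⟨fun _ => Or.inl (not_lt.1 h), fun _ => bot_le⟩
  rw [heq]
  exact IsClosed.union (isClosed_le (continuous_affine w' d') (continuous_affine w'' d''))
    (isClosed_toE_le _ (continuous_affine w' d') S)


lemma closed_of_usep {C : Set (Fin n → Rmax)}
    (hU : ∀ y, y ∉ C → ∃ (w' w'' : Fin n → Rmax) (d' d'' : Rmax),
      (⨆ x ∈ C, Rmax.toE (rdiff (max (mdot w' x) d') (max (mdot w'' x) d''))) <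
        Rmax.toE (rdiff (max (mdot w' y) d') (max (mdot w'' y) d''))) :
    IsClosed C := by
  choose w1 w2 d1 d2 hsep using hU
  have hC : C = ⋂ (y : Fin n → Rmax), ⋂ (hy : y ∉ C),
      {x | Rmax.toE (rdiff (max (mdot (w1 y hy) x) (d1 y hy)) (max (mdot (w2 y hy) x) (d2 y hy)))
        ≤ ⨆ x' ∈ C, Rmax.toE (rdiff (max (mdot (w1 y hy) x') (d1 y hy))
            (max (mdot (w2 y hy) x') (d2 y hy)))} := by
    ext x
    simp only [Set.mem_iInter, Set.mem_setOf_eq]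
    constructor
    · intro hx y hy
      exact le_biSup (f := fun x' => Rmax.toE (rdiff (max (mdot (w1 y hy) x') (d1 y hy))
        (max (mdot (w2 y hy) x') (d2 y hy)))) hx
    · intro hx
      by_contra hxC
      exact absurd (hx x hxC) (not_le.2 (hsep x hxC))
  rw [hC]
  exact isClosed_iInter fun y => isClosed_iInter fun hy => isClosed_sep_sublevel _ _ _ _ _

lemma convex_of_usep {C : Set (Fin n → Rmax)}
    (hU : ∀ y, y ∉ C → ∃ (w' w'' : Fin n → Rmax) (d' d'' : Rmax),
      (⨆ x ∈ C, Rmax.toE (rdiff (max (mdot w' x) d') (max (mdot w'' x) d''))) <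
        Rmax.toE (rdiff (max (mdot w' y) d') (max (mdot w'' y) d''))) :
    MPConvex C := by
  intro x hx y' hy' α β hab
  by_contra hz
  obtain ⟨w1, w2, d1, d2, hsep⟩ := hU _ hz
  have hα : α ≤ 0 := hab ▸ le_max_left α β
  have hβ : β ≤ 0 := hab ▸ le_max_right α β
  set f : (Fin n → Rmax) → EReal :=
    fun v => Rmax.toE (rdiff (max (mdot w1 v) d1) (max (mdot w2 v) d2)) with hf
  have key : f (fun i => max (α + x i) (β + y' i)) ≤ max (f x) (f y') := by
    rw [hf]
    simp only
    rw [affine_combo hab, affine_combo hab]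
    refine le_trans (toE_mono (rdiff_combo_le hα hβ)) ?_
    rw [toE_mono.map_max]
  have hx' : f x ≤ ⨆ x' ∈ C, f x' := le_biSup _ hx
  have hy'' : f y' ≤ ⨆ x' ∈ C, f x' := le_biSup _ hy'
  have : f (fun i => max (α + x i) (β + y' i)) ≤ ⨆ x' ∈ C, f x' :=
    le_trans key (max_le hx' hy'')
  exact absurd (lt_of_le_of_lt this hsep) (lt_irrefl _)


/-! ### the projection argument: approximation -/

lemma coe_le_zero {a : ℝ} : ((a : Rmax) ≤ 0) ↔ a ≤ 0 := by
  rw [show (0 : Rmax) = ((0:ℝ) : Rmax) from rfl, WithBot.coe_le_coe]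

lemma joinC {C : Set (Fin n → Rmax)} {y : Fin n → Rmax} (hconv : MPConvex C)
    {x x' : Fin n → Rmax} (hx : x ∈ C) (hx' : x' ∈ C)
    (hlx : lam y x ≠ ⊥) (hlx' : lam y x' ≠ ⊥) :
    ∃ m ∈ C, (lam y x ≤ lam y m ∧ lam y x' ≤ lam y m) ∧
      (∀ i, lam y x + x i ≤ lam y m + m i) ∧
      (∀ i, lam y x' + x' i ≤ lam y m + m i) := by
  obtain ⟨a, ha⟩ := WithBot.ne_bot_iff_exists.1 hlx
  obtain ⟨b, hb⟩ := WithBot.ne_bot_iff_exists.1 hlx'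
  set M : ℝ := max a b with hM
  have ha0 : a ≤ 0 := coe_le_zero.1 (ha ▸ lam_le_zero)
  have hb0 : b ≤ 0 := coe_le_zero.1 (hb ▸ lam_le_zero)
  have hM0 : M ≤ 0 := max_le ha0 hb0
  set α : Rmax := ((a - M : ℝ) : Rmax) with hα
  set β : Rmax := ((b - M : ℝ) : Rmax) with hβ
  have hab : max α β = 0 := by
    rw [hα, hβ, ← WithBot.coe_max, max_sub_sub_right, ← hM, sub_self]
    rfl
  have hm := hconv x hx x' hx' α β hab
  set m : Fin n → Rmax := fun i => max (α + x i) (β + x' i) with hmdef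
  have hax : ∀ i, ((M:ℝ) : Rmax) + (α + x i) = lam y x + x i := by
    intro i
    rw [← add_assoc, hα, ← WithBot.coe_add, ← ha]
    norm_num
  have hbx : ∀ i, ((M:ℝ) : Rmax) + (β + x' i) = lam y x' + x' i := by
    intro i
    rw [← add_assoc, hβ, ← WithBot.coe_add, ← hb]
    norm_num
  have hMle : ∀ i, ((M:ℝ) : Rmax) + m i ≤ y i := by
    intro i
    rw [hmdef]
    simp only
    rw [add_max]
    exact max_le (by rw [hax i]; exact lam_add_le i) (by rw [hbx i]; exact lam_add_le i)
  have hMlam : ((M:ℝ) : Rmax) ≤ lam y m := le_lam (coe_le_zero.2 hM0) hMle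
  refine ⟨m, hm, ⟨?_, ?_⟩, ?_, ?_⟩
  · rw [← ha]
    exact le_trans (WithBot.coe_le_coe.2 (le_max_left a b)) hMlam
  · rw [← hb]
    exact le_trans (WithBot.coe_le_coe.2 (le_max_right a b)) hMlam
  · intro i
    calc lam y x + x i = ((M:ℝ):Rmax) + (α + x i) := (hax i).symm
      _ ≤ ((M:ℝ):Rmax) + m i := add_le_add_right (le_max_left _ _) _
      _ ≤ lam y m + m i := add_le_add_left hMlam _
  · intro i
    calc lam y x' + x' i = ((M:ℝ):Rmax) + (β + x' i) := (hbx i).symm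
      _ ≤ ((M:ℝ):Rmax) + m i := add_le_add_right (le_max_right _ _) _
      _ ≤ lam y m + m i := add_le_add_left hMlam _

lemma combineWitness {C : Set (Fin n → Rmax)} {y : Fin n → Rmax} (hconv : MPConvex C)
    (hμ : muC C y = 0) (hν : ∀ i, y i ≠ ⊥ → nuC C y i = y i) {ε : ℝ} (hε : 0 < ε) :
    ∃ c ∈ C, ((-ε : ℝ) : Rmax) < lam y c ∧
      ∀ i, y i ≠ ⊥ → y i + ((-ε : ℝ) : Rmax) < lam y c + c i := by
  have main : ∀ F : Finset (Fin n), ∃ c ∈ C, ((-ε : ℝ) : Rmax) < lam y c ∧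
      ∀ i ∈ F, y i ≠ ⊥ → y i + ((-ε : ℝ) : Rmax) < lam y c + c i := by
    intro F
    induction F using Finset.induction with
    | empty =>
      have h0 : ((-ε : ℝ) : Rmax) < muC C y := by
        rw [hμ]
        rw [show (0 : Rmax) = ((0:ℝ) : Rmax) from rfl, WithBot.coe_lt_coe]
        linarith
      obtain ⟨v, hv, hlt⟩ := exists_lt_of_lt_RSup h0
      obtain ⟨c, hc, rfl⟩ := hv
      exact ⟨c, hc, hlt, fun i hi => absurd hi (by simp)⟩
    | @insert j F hj ih =>
      obtain ⟨c, hcC, hc1, hc2⟩ := ih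
      by_cases hyj : y j = ⊥
      · refine ⟨c, hcC, hc1, fun i hi hyi => ?_⟩
        rcases Finset.mem_insert.1 hi with rfl | hiF
        · exact absurd hyj hyi
        · exact hc2 i hiF hyi
      · have hylt : y j + ((-ε : ℝ) : Rmax) < nuC C y j := by
          rw [hν j hyj]
          obtain ⟨s, hs⟩ := WithBot.ne_bot_iff_exists.1 hyj
          rw [← hs, ← WithBot.coe_add, WithBot.coe_lt_coe]
          linarith
        obtain ⟨v, hv, hlt⟩ := exists_lt_of_lt_RSup hylt
        obtain ⟨z, hzC, rfl⟩ := hv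
        simp only at hlt
        have hlz : lam y z ≠ ⊥ := by
          intro hbot
          rw [hbot, WithBot.bot_add] at hlt
          exact absurd hlt (by simp)
        have hlc : lam y c ≠ ⊥ := ne_bot_of_gt hc1
        obtain ⟨m, hmC, ⟨hmc, hmz⟩, hmci, hmzi⟩ := joinC hconv hcC hzC hlc hlz
        refine ⟨m, hmC, lt_of_lt_of_le hc1 hmc, fun i hi hyi => ?_⟩
        rcases Finset.mem_insert.1 hi with rfl | hiF
        · exact lt_of_lt_of_le hlt (hmzi i)
        · exact lt_of_lt_of_le (hc2 i hiF hyi) (hmci i)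
  obtain ⟨c, hc, h1, h2⟩ := main Finset.univ
  exact ⟨c, hc, h1, fun i => h2 i (Finset.mem_univ i)⟩


lemma one_div_succ_le {K k : ℕ} (hk : K ≤ k) : 1/((k:ℝ)+1) ≤ 1/((K:ℝ)+1) := by
  apply one_div_le_one_div_of_le
  · positivity
  · have : (K:ℝ) ≤ (k:ℝ) := Nat.cast_le.2 hk
    linarith

lemma mem_of_proj {C : Set (Fin n → Rmax)} {y : Fin n → Rmax} (hconv : MPConvex C)
    (hcl : IsClosed C) (hμ : muC C y = 0) (hν : ∀ i, y i ≠ ⊥ → nuC C y i = y i) :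
    y ∈ C := by
  have hex : ∀ k : ℕ, ∃ c ∈ C, ((-(1/((k:ℝ)+1)) : ℝ) : Rmax) < lam y c ∧
      ∀ i, y i ≠ ⊥ → y i + ((-(1/((k:ℝ)+1)) : ℝ) : Rmax) < lam y c + c i :=
    fun k => combineWitness hconv hμ hν (by positivity)
  choose c hcC hc1 hc2 using hex
  have htend : Filter.Tendsto c Filter.atTop (nhds y) := by
    rw [tendsto_pi_nhds]
    intro i
    by_cases hyi : y i = ⊥
    · have hconst : ∀ k, c k i = ⊥ := fun k =>
        nonesc_of_lam_ne_bot (ne_bot_of_gt (hc1 k)) i hyi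
      have heq : (fun k => c k i) = fun _ => (⊥ : Rmax) := funext hconst
      rw [heq, hyi]
      exact tendsto_const_nhds
    · obtain ⟨s, hs⟩ := WithBot.ne_bot_iff_exists.1 hyi
      have hlow : ∀ k : ℕ, ((s - 1/((k:ℝ)+1) : ℝ) : Rmax) < c k i := by
        intro k
        have h1 := hc2 k i hyi
        have h2 : lam y (c k) + c k i ≤ 0 + c k i := add_le_add_left lam_le_zero _
        rw [zero_add] at h2
        have h3 : y i + ((-(1/((k:ℝ)+1)) : ℝ) : Rmax) < c k i := lt_of_lt_of_le h1 h2
        rw [← hs, ← WithBot.coe_add] at h3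
        have he : s + -(1/((k:ℝ)+1)) = s - 1/((k:ℝ)+1) := by ring
        rwa [he] at h3
      have hup : ∀ k : ℕ, c k i ≤ ((s + 1/((k:ℝ)+1) : ℝ) : Rmax) := by
        intro k
        by_contra hcon
        push_neg at hcon
        have h1 : ((-(1/((k:ℝ)+1)) : ℝ) : Rmax) + ((s + 1/((k:ℝ)+1) : ℝ) : Rmax) <
            ((-(1/((k:ℝ)+1)) : ℝ) : Rmax) + c k i :=
          (WithBot.add_lt_add_iff_left (WithBot.coe_ne_bot)).2 hcon
        have h2 : ((-(1/((k:ℝ)+1)) : ℝ) : Rmax) + c k i ≤ lam y (c k) + c k i :=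
          add_le_add_left (le_of_lt (hc1 k)) _
        have h3 := lam_add_le (y := y) (x := c k) i
        rw [← hs] at h3
        have h4 := lt_of_lt_of_le (lt_of_lt_of_le h1 h2) h3
        rw [← WithBot.coe_add, WithBot.coe_lt_coe] at h4
        linarith
      rw [← hs, tendsto_order]
      constructor
      · intro a' ha'
        induction a' with
        | none =>
          exact Filter.Eventually.of_forall
            (fun k => lt_of_lt_of_le (WithBot.bot_lt_coe _) (le_of_lt (hlow k)))
        | some t =>
          have hts : t < s := by
            rw [show (some t : Rmax) = ((t:ℝ):Rmax) from rfl, WithBot.coe_lt_coe] at ha'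
            exact ha'
          obtain ⟨K, hK⟩ := exists_nat_one_div_lt (show (0:ℝ) < s - t by linarith)
          refine Filter.eventually_atTop.2 ⟨K, fun k hk => ?_⟩
          refine lt_trans ?_ (hlow k)
          rw [show (some t : Rmax) = ((t:ℝ):Rmax) from rfl, WithBot.coe_lt_coe]
          have := one_div_succ_le (k := k) (K := K) hk
          linarith
      · intro a' ha'
        induction a' with
        | none => exact absurd ha' not_lt_bot
        | some t =>
          have hts : s < t := WithBot.coe_lt_coe.1 ha'
          obtain ⟨K, hK⟩ := exists_nat_one_div_lt (show (0:ℝ) < t - s by linarith)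
          refine Filter.eventually_atTop.2 ⟨K, fun k hk => ?_⟩
          refine lt_of_le_of_lt (hup k) ?_
          rw [show (some t : Rmax) = ((t:ℝ):Rmax) from rfl, WithBot.coe_lt_coe]
          have := one_div_succ_le (k := k) (K := K) hk
          linarith
  exact hcl.mem_of_tendsto htend (Filter.Eventually.of_forall hcC)


/-! ### compactness helpers -/

lemma eq_bot_of_le_coe_seq {a : Rmax} {r : ℝ} (h : ∀ l : ℕ, a ≤ ((r - l : ℝ) : Rmax)) :
    a = ⊥ := by
  induction a with
  | none => rw [WithBot.none_eq_bot]
  | some t =>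
    exfalso
    obtain ⟨l, hl⟩ := exists_nat_gt (r - t)
    have := h l
    rw [show (some t : Rmax) = ((t:ℝ):Rmax) from rfl, WithBot.coe_le_coe] at this
    linarith

lemma lt_shift {r c : ℝ} {a : Rmax} (h : (r : Rmax) + a < (c : Rmax)) :
    a ≤ ((c - r : ℝ) : Rmax) := by
  induction a with
  | none => exact bot_le
  | some v =>
    rw [show (some v : Rmax) = ((v:ℝ):Rmax) from rfl] at h ⊢
    rw [← WithBot.coe_add, WithBot.coe_lt_coe] at h
    rw [WithBot.coe_le_coe]
    linarith

lemma compact_limit {D : ℕ → Set (Fin n → Rmax)} (hD : ∀ l, IsClosed (D l))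
    (hmono : ∀ l, D (l+1) ⊆ D l) (hne : ∀ l, (D l).Nonempty)
    (M : Fin n → Rmax) (hM : ∀ x ∈ D 0, ∀ i, x i ≤ M i) : (⋂ l, D l).Nonempty := by
  have hc0 : IsCompact (D 0) := by
    refine IsCompact.of_isClosed_subset
      (isCompact_univ_pi (fun i => isCompact_Icc (a := (⊥:Rmax)) (b := M i))) (hD 0) ?_
    intro x hx
    exact Set.mem_univ_pi.2 fun i => ⟨bot_le, hM x hx i⟩
  exact IsCompact.nonempty_iInter_of_sequence_nonempty_isCompact_isClosed D hmono hne hc0 hD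

lemma isClosed_cond_le (c : Fin n → Rmax) (P : Fin n → Prop) :
    IsClosed {x : Fin n → Rmax | ∀ i, P i → x i ≤ c i} := by
  have heq : {x : Fin n → Rmax | ∀ i, P i → x i ≤ c i}
      = ⋂ i, {x : Fin n → Rmax | P i → x i ≤ c i} := by
    ext x; simp [Set.mem_iInter]
  rw [heq]
  refine isClosed_iInter fun i => ?_
  by_cases hP : P i
  · have h2 : {x : Fin n → Rmax | P i → x i ≤ c i} = {x | x i ≤ c i} := by
      ext x; simp [hP]
    rw [h2]
    exact isClosed_le (continuous_apply i) continuous_const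
  · have h2 : {x : Fin n → Rmax | P i → x i ≤ c i} = Set.univ := by
      ext x; simp [hP]
    rw [h2]
    exact isClosed_univ

/-! ### Case I: `μ < 0` -/

lemma caseI {C : Set (Fin n → Rmax)} {y : Fin n → Rmax} (hcl : IsClosed C)
    (hμ : muC C y < 0) :
    ∃ (w' w'' : Fin n → Rmax) (d' d'' : Rmax) (t : EReal),
      (∀ x ∈ C, Rmax.toE (rdiff (max (mdot w' x) d') (max (mdot w'' x) d'')) ≤ t) ∧
      t < Rmax.toE (rdiff (max (mdot w' y) d') (max (mdot w'' y) d'')) := by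
  -- choose `p`
  obtain ⟨p, hpμ, hp0, hpgap⟩ : ∃ p : ℝ, muC C y ≤ (p : Rmax) ∧ p < 0 ∧
      muC C y < ((p/2 : ℝ) : Rmax) := by
    by_cases hbot : muC C y = ⊥
    · exact ⟨-2, hbot ▸ bot_le, by norm_num, hbot ▸ WithBot.bot_lt_coe _⟩
    · obtain ⟨m, hm⟩ := WithBot.ne_bot_iff_exists.1 hbot
      have hm0 : m < 0 := by
        rw [← hm, show (0:Rmax) = ((0:ℝ):Rmax) from rfl, WithBot.coe_lt_coe] at hμ
        exact hμ
      exact ⟨m, le_of_eq hm.symm, hm0, by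
        rw [← hm, WithBot.coe_lt_coe]; linarith⟩
  set w2 : ℕ → Fin n → Rmax :=
    fun k i => if y i = ⊥ then ((k : ℝ) : Rmax) else ((p/2 : ℝ) : Rmax) + Rneg (y i)
    with hw2
  have key : ∃ k : ℕ, ∀ x ∈ C, (0 : Rmax) ≤ mdot (w2 k) x := by
    by_contra hcon
    push_neg at hcon
    choose xx hxxC hxx using hcon
    -- coordinatewise bounds on the bad points
    have hbd1 : ∀ k i, y i = ⊥ → xx k i ≤ ((0 - (k:ℝ) : ℝ) : Rmax) := by
      intro k i hyi
      have h1 := lt_of_le_of_lt (le_mdot (w2 k) (xx k) i) (hxx k)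
      rw [hw2] at h1
      simp only [hyi, if_pos] at h1
      rw [show (0 : Rmax) = ((0:ℝ):Rmax) from rfl] at h1
      exact lt_shift h1
    have hbd2 : ∀ k i (s : ℝ), y i = (s : Rmax) → xx k i ≤ ((s - p/2 : ℝ) : Rmax) := by
      intro k i s hyi
      have h1 := lt_of_le_of_lt (le_mdot (w2 k) (xx k) i) (hxx k)
      rw [hw2] at h1
      simp only at h1
      rw [hyi, if_neg (WithBot.coe_ne_bot (a := s))] at h1
      rw [Rneg_coe, ← WithBot.coe_add, show (0 : Rmax) = ((0:ℝ):Rmax) from rfl] at h1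
      have h2 := lt_shift h1
      have he : (0 : ℝ) - (p/2 + -s) = s - p/2 := by ring
      rwa [he] at h2
    -- the decreasing family
    set M : Fin n → Rmax := fun i => if h : y i = ⊥ then ((0:ℝ):Rmax)
      else y i + ((-(p/2) : ℝ) : Rmax) with hMdef
    set D : ℕ → Set (Fin n → Rmax) := fun l =>
      C ∩ {x | ∀ i, x i ≤ M i} ∩ {x | ∀ i, y i = ⊥ → x i ≤ ((0 - (l:ℝ) : ℝ) : Rmax)}
      with hD
    have hMbd : ∀ k i, xx k i ≤ M i := by
      intro k i
      simp only [hMdef]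
      by_cases hyi : y i = ⊥
      · rw [dif_pos hyi]
        refine le_trans (hbd1 k i hyi) ?_
        rw [WithBot.coe_le_coe]
        have : (0:ℝ) ≤ (k:ℝ) := Nat.cast_nonneg k
        linarith
      · rw [dif_neg hyi]
        obtain ⟨s, hs⟩ := WithBot.ne_bot_iff_exists.1 hyi
        rw [← hs, ← WithBot.coe_add]
        refine le_trans (hbd2 k i s hs.symm) ?_
        rw [WithBot.coe_le_coe]
        linarith
    have hDcl : ∀ l, IsClosed (D l) := by
      intro l
      refine IsClosed.inter (IsClosed.inter hcl ?_) (isClosed_cond_le _ _)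
      have heq : {x : Fin n → Rmax | ∀ i, x i ≤ M i}
          = {x : Fin n → Rmax | ∀ i, True → x i ≤ M i} := by
        ext x; simp
      rw [heq]
      exact isClosed_cond_le _ _
    have hDmono : ∀ l, D (l+1) ⊆ D l := by
      intro l x hx
      refine ⟨hx.1, fun i hyi => ?_⟩
      refine le_trans (hx.2 i hyi) ?_
      rw [WithBot.coe_le_coe]
      push_cast
      linarith
    have hDne : ∀ l, (D l).Nonempty := by
      intro l
      exact ⟨xx l, ⟨hxxC l, fun i => hMbd l i⟩, fun i hyi => hbd1 l i hyi⟩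
    obtain ⟨mm, hmm⟩ := compact_limit hDcl hDmono hDne M
      (fun x hx i => hx.1.2 i)
    simp only [Set.mem_iInter] at hmm
    have hmmC : mm ∈ C := (hmm 0).1.1
    have hmbot : ∀ i, y i = ⊥ → mm i = ⊥ := by
      intro i hyi
      exact eq_bot_of_le_coe_seq (fun l => (hmm l).2 i hyi)
    have hlam : ((p/2 : ℝ) : Rmax) ≤ lam y mm := by
      refine le_lam (coe_le_zero.2 (by linarith)) ?_
      intro i
      by_cases hyi : y i = ⊥
      · rw [hmbot i hyi, WithBot.add_bot]
        exact bot_le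
      · obtain ⟨s, hs⟩ := WithBot.ne_bot_iff_exists.1 hyi
        have h1 : mm i ≤ ((s - p/2 : ℝ) : Rmax) := by
          have := (hmm 0).1.2 i
          simp only [hMdef] at this
          rw [dif_neg hyi, ← hs, ← WithBot.coe_add] at this
          have he : s + -(p/2) = s - p/2 := by ring
          rwa [he] at this
        calc ((p/2:ℝ) : Rmax) + mm i ≤ ((p/2:ℝ):Rmax) + ((s - p/2 : ℝ) : Rmax) :=
              add_le_add_right h1 _
          _ = y i := by rw [← WithBot.coe_add, ← hs]; norm_num
    exact absurd (lt_of_le_of_lt (le_trans hlam (lam_le_muC hmmC)) hpgap) (lt_irrefl _)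
  obtain ⟨k, hk⟩ := key
  refine ⟨fun _ => ⊥, w2 k, 0, ⊥, ⊥, ?_, ?_⟩
  · intro x hx
    rw [mdot_bot, max_eq_right bot_le, max_eq_left bot_le]
    rw [rdiff, if_neg (not_lt.2 (hk x hx))]
    rw [toE_bot]
  · rw [mdot_bot, max_eq_right bot_le, max_eq_left bot_le]
    have hBy : mdot (w2 k) y < 0 := by
      have h1 : mdot (w2 k) y ≤ ((p/2 : ℝ) : Rmax) := by
        rw [mdot_le_iff]
        intro i
        rw [hw2]
        simp only
        by_cases hyi : y i = ⊥
        · rw [if_pos hyi, hyi, WithBot.add_bot]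
          exact bot_le
        · rw [if_neg hyi]
          obtain ⟨s, hs⟩ := WithBot.ne_bot_iff_exists.1 hyi
          rw [← hs, Rneg_coe, ← WithBot.coe_add, ← WithBot.coe_add, WithBot.coe_le_coe]
          linarith
      refine lt_of_le_of_lt h1 ?_
      rw [show (0 : Rmax) = ((0:ℝ):Rmax) from rfl, WithBot.coe_lt_coe]
      linarith
    rw [rdiff, if_pos hBy]
    rw [show (0 : Rmax) = ((0:ℝ):Rmax) from rfl, toE_coe]
    exact EReal.bot_lt_coe (0:ℝ)


/-! ### Case II: `μ = 0`, `ν j < y j` -/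

lemma caseII {C : Set (Fin n → Rmax)} {y : Fin n → Rmax} (hconv : MPConvex C)
    (hcl : IsClosed C) (hμ : muC C y = 0) {j : Fin n} {yj : ℝ} (hyj : y j = (yj : Rmax))
    (hν : nuC C y j < y j) :
    ∃ (w' w'' : Fin n → Rmax) (d' d'' : Rmax) (t : EReal),
      (∀ x ∈ C, Rmax.toE (rdiff (max (mdot w' x) d') (max (mdot w'' x) d'')) ≤ t) ∧
      t < Rmax.toE (rdiff (max (mdot w' y) d') (max (mdot w'' y) d'')) := by
  -- choose q
  obtain ⟨q, hq1, hq2, hq3⟩ : ∃ q : ℝ, nuC C y j ≤ (q : Rmax) ∧ q < yj ∧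
      ∀ r : ℝ, q < r → nuC C y j < (r : Rmax) := by
    by_cases hbot : nuC C y j = ⊥
    · exact ⟨yj - 2, hbot ▸ bot_le, by linarith,
        fun r _ => hbot ▸ WithBot.bot_lt_coe r⟩
    · obtain ⟨v, hv⟩ := WithBot.ne_bot_iff_exists.1 hbot
      have hvy : v < yj := by
        rw [← hv, hyj, WithBot.coe_lt_coe] at hν
        exact hν
      exact ⟨v, le_of_eq hv.symm, hvy,
        fun r hr => by rw [← hv, WithBot.coe_lt_coe]; exact hr⟩
  set h : ℝ := min 1 (yj - q) / 2 with hhdef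
  have hh0 : 0 < h := by
    rw [hhdef]
    have : (0:ℝ) < min 1 (yj - q) := lt_min one_pos (by linarith)
    linarith
  have h2h : 2*h ≤ yj - q := by
    rw [hhdef]
    have := min_le_right (1:ℝ) (yj - q)
    linarith
  set τ : ℝ := q + h/2 with hτdef
  set ε : ℝ := h/4 with hεdef
  -- anchor
  obtain ⟨x0, hx0C, hx0⟩ : ∃ x0 ∈ C, ((-ε : ℝ) : Rmax) < lam y x0 := by
    have h0 : ((-ε : ℝ) : Rmax) < muC C y := by
      rw [hμ, show (0 : Rmax) = ((0:ℝ) : Rmax) from rfl, WithBot.coe_lt_coe]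
      linarith
    obtain ⟨v, hv, hlt⟩ := exists_lt_of_lt_RSup h0
    obtain ⟨c, hc, rfl⟩ := hv
    exact ⟨c, hc, hlt⟩
  have hx0b : lam y x0 ≠ ⊥ := ne_bot_of_gt hx0
  set w1 : Fin n → Rmax := fun i => if i = j then ((-q : ℝ) : Rmax) else ⊥ with hw1
  set w2 : ℕ → Fin n → Rmax := fun k i => if y i = ⊥ then ((k : ℝ) : Rmax)
    else if i = j then ⊥ else ((h/2 : ℝ) : Rmax) + Rneg (y i) with hw2
  have hAx : ∀ x : Fin n → Rmax, max (mdot w1 x) ⊥ = ((-q : ℝ) : Rmax) + x j := by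
    intro x
    rw [max_eq_left bot_le, hw1, mdot_single]
  have key : ∃ k : ℕ, ∀ x ∈ C,
      max (mdot (w2 k) x) 0 < ((-q : ℝ) : Rmax) + x j → x j ≤ ((q + h : ℝ) : Rmax) := by
    by_contra hcon
    push_neg at hcon
    choose xx hxxC hxxbad hxxbig using hcon
    have hrk : ∀ k : ℕ, ∃ rk : ℝ, (rk : Rmax) = xx k j ∧ q + h < rk := by
      intro k
      have hne : xx k j ≠ ⊥ := ne_bot_of_gt (hxxbig k)
      obtain ⟨rk, hr⟩ := WithBot.ne_bot_iff_exists.1 hne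
      refine ⟨rk, hr, ?_⟩
      have := hxxbig k
      rw [← hr, WithBot.coe_lt_coe] at this
      exact this
    choose rk hrkeq hrkbig using hrk
    set al : ℕ → ℝ := fun k => τ - rk k with haldef
    have hal0 : ∀ k, al k ≤ 0 := by
      intro k
      rw [haldef]
      simp only
      rw [hτdef]
      have := hrkbig k
      linarith
    set mk : ℕ → Fin n → Rmax := fun k i =>
      max ((0 : Rmax) + x0 i) (((al k : ℝ) : Rmax) + xx k i) with hmkdef
    have hmkC : ∀ k, mk k ∈ C := by
      intro k
      refine hconv x0 hx0C (xx k) (hxxC k) 0 ((al k : ℝ) : Rmax) ?_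
      rw [max_eq_left]
      rw [show (0 : Rmax) = ((0:ℝ) : Rmax) from rfl, WithBot.coe_le_coe]
      exact hal0 k
    set ρ : Rmax := max (x0 j) ((τ : ℝ) : Rmax) with hρdef
    have hmkj : ∀ k, mk k j = ρ := by
      intro k
      simp only [hmkdef]
      rw [zero_add, ← hrkeq k, ← WithBot.coe_add, hρdef]
      have he : al k + rk k = τ := by rw [haldef]; ring
      rw [he]
    -- bad inequality unpacked
    have hbadi : ∀ k i, w2 k i + xx k i < ((rk k - q : ℝ) : Rmax) := by
      intro k i
      have h1 := lt_of_le_of_lt (le_trans (le_mdot (w2 k) (xx k) i) (le_max_left _ _))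
        (hxxbad k)
      rw [← hrkeq k, ← WithBot.coe_add] at h1
      have he : -q + rk k = rk k - q := by ring
      rwa [he] at h1
    have hb1 : ∀ k i, y i = ⊥ → xx k i ≤ ((rk k - q - k : ℝ) : Rmax) := by
      intro k i hyi
      have h1 := hbadi k i
      rw [hw2] at h1
      simp only [hyi, if_pos] at h1
      have h2 := lt_shift h1
      have he : rk k - q - (k:ℝ) = rk k - q - k := by ring
      rwa [he] at h2
    have hb2 : ∀ k i (s : ℝ), i ≠ j → y i = (s : Rmax) →
        xx k i ≤ ((s + rk k - q - h/2 : ℝ) : Rmax) := by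
      intro k i s hij hyi
      have h1 := hbadi k i
      rw [hw2] at h1
      simp only at h1
      rw [hyi, if_neg (WithBot.coe_ne_bot (a := s)), if_neg hij, Rneg_coe,
        ← WithBot.coe_add] at h1
      have h2 := lt_shift h1
      have he : rk k - q - (h/2 + -s) = s + rk k - q - h/2 := by ring
      rwa [he] at h2
    -- bounds on mk
    set MM : Fin n → Rmax := fun i => if y i = ⊥ then ((h/2 : ℝ) : Rmax)
      else max (x0 i) (y i) with hMMdef
    have hx0bot : ∀ i, y i = ⊥ → x0 i = ⊥ := fun i hyi =>
      nonesc_of_lam_ne_bot hx0b i hyi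
    have hmkbot : ∀ k i, y i = ⊥ → mk k i ≤ ((h/2 - k : ℝ) : Rmax) := by
      intro k i hyi
      simp only [hmkdef]
      rw [hx0bot i hyi]
      refine max_le ?_ ?_
      · rw [show (0:Rmax) + ⊥ = ⊥ from by rw [WithBot.add_bot]]
        exact bot_le
      · have h1 := hb1 k i hyi
        calc ((al k : ℝ) : Rmax) + xx k i ≤ ((al k : ℝ) : Rmax) + ((rk k - q - k : ℝ) : Rmax) :=
              add_le_add_right h1 _
          _ = ((h/2 - k : ℝ) : Rmax) := by
              rw [← WithBot.coe_add]
              congr 1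
              rw [haldef, hτdef]
              ring
    have hmkMM : ∀ k i, mk k i ≤ MM i := by
      intro k i
      by_cases hyi : y i = ⊥
      · rw [hMMdef]
        simp only [hyi, if_pos]
        refine le_trans (hmkbot k i hyi) ?_
        rw [WithBot.coe_le_coe]
        have : (0:ℝ) ≤ (k:ℝ) := Nat.cast_nonneg k
        linarith
      · rw [hMMdef]
        simp only [hyi, if_neg, ite_false]
        by_cases hij : i = j
        · subst hij
          rw [hmkj k, hρdef]
          refine max_le (le_max_left _ _) ?_
          refine le_trans ?_ (le_max_right _ _)
          rw [hyj, WithBot.coe_le_coe]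
          rw [hτdef]
          linarith
        · obtain ⟨s, hs⟩ := WithBot.ne_bot_iff_exists.1 hyi
          simp only [hmkdef]
          rw [zero_add]
          refine max_le (le_max_left _ _) ?_
          refine le_trans ?_ (le_max_right _ _)
          have h1 := hb2 k i s hij hs.symm
          calc ((al k : ℝ) : Rmax) + xx k i
              ≤ ((al k : ℝ) : Rmax) + ((s + rk k - q - h/2 : ℝ) : Rmax) :=
                add_le_add_right h1 _
            _ ≤ y i := by
                rw [← WithBot.coe_add, ← hs, WithBot.coe_le_coe]
                rw [haldef, hτdef]
                simp only
                linarith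
    -- the decreasing family
    set D : ℕ → Set (Fin n → Rmax) := fun l =>
      (C ∩ {x | x j ≤ ρ ∧ ρ ≤ x j}) ∩
        ({x | ∀ i, x i ≤ MM i} ∩ {x | ∀ i, y i = ⊥ → x i ≤ ((h/2 - (l:ℝ) : ℝ) : Rmax)})
      with hDdef
    have hDcl : ∀ l, IsClosed (D l) := by
      intro l
      refine IsClosed.inter (IsClosed.inter hcl ?_) (IsClosed.inter ?_ (isClosed_cond_le _ _))
      · exact IsClosed.inter (isClosed_le (continuous_apply j) continuous_const)
          (isClosed_le continuous_const (continuous_apply j))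
      · have heq : {x : Fin n → Rmax | ∀ i, x i ≤ MM i}
            = {x : Fin n → Rmax | ∀ i, True → x i ≤ MM i} := by
          ext x; simp
        rw [heq]
        exact isClosed_cond_le _ _
    have hDmono : ∀ l, D (l+1) ⊆ D l := by
      intro l x hx
      refine ⟨hx.1, hx.2.1, fun i hyi => le_trans (hx.2.2 i hyi) ?_⟩
      rw [WithBot.coe_le_coe]
      push_cast
      linarith
    have hDne : ∀ l, (D l).Nonempty := by
      intro l
      refine ⟨mk l, ⟨hmkC l, le_of_eq (hmkj l), le_of_eq (hmkj l).symm⟩,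
        fun i => hmkMM l i, fun i hyi => ?_⟩
      exact hmkbot l i hyi
    obtain ⟨mm, hmm⟩ := compact_limit hDcl hDmono hDne MM (fun x hx i => hx.2.1 i)
    simp only [Set.mem_iInter] at hmm
    have hmmC : mm ∈ C := (hmm 0).1.1
    have hmmj : mm j = ρ := le_antisymm (hmm 0).1.2.1 (hmm 0).1.2.2
    have hmbot : ∀ i, y i = ⊥ → mm i = ⊥ := by
      intro i hyi
      exact eq_bot_of_le_coe_seq (fun l => (hmm l).2.2 i hyi)
    have hmmMM : ∀ i, mm i ≤ MM i := (hmm 0).2.1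
    -- lam y mm ≥ -ε
    have hlam : ((-ε : ℝ) : Rmax) ≤ lam y mm := by
      refine le_lam (coe_le_zero.2 (by linarith)) ?_
      intro i
      by_cases hyi : y i = ⊥
      · rw [hmbot i hyi, WithBot.add_bot]
        exact bot_le
      · have hx0i : ((-ε : ℝ) : Rmax) + x0 i ≤ y i :=
          le_trans (add_le_add_left (le_of_lt hx0) _) (lam_add_le i)
        by_cases hij : i = j
        · subst hij
          rw [hmmj, hρdef, add_max]
          refine max_le hx0i ?_
          rw [← WithBot.coe_add, hyj, WithBot.coe_le_coe]
          rw [hτdef]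
          linarith
        · have h1 : mm i ≤ max (x0 i) (y i) := by
            have := hmmMM i
            rw [hMMdef] at this
            simpa [hyi] using this
          refine le_trans (add_le_add_right h1 _) ?_
          rw [add_max]
          refine max_le hx0i ?_
          obtain ⟨s, hs⟩ := WithBot.ne_bot_iff_exists.1 hyi
          rw [← hs, ← WithBot.coe_add, WithBot.coe_le_coe]
          linarith
    -- contradiction with hq3
    have hcontra : ((q + h/4 : ℝ) : Rmax) ≤ nuC C y j := by
      refine le_trans ?_ (lam_add_le_nuC hmmC j)
      rw [hmmj]
      calc ((q + h/4 : ℝ) : Rmax) = ((-ε : ℝ) : Rmax) + ((τ : ℝ) : Rmax) := by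
            rw [← WithBot.coe_add]
            congr 1
            rw [hεdef, hτdef]
            ring
        _ ≤ ((-ε : ℝ) : Rmax) + ρ := add_le_add_right (le_max_right _ _) _
        _ ≤ lam y mm + ρ := add_le_add_left hlam _
    exact absurd (lt_of_le_of_lt hcontra (hq3 (q + h/4) (by linarith))) (lt_irrefl _)
  obtain ⟨k, hk⟩ := key
  refine ⟨w1, w2 k, ⊥, 0, ((h : ℝ) : EReal), ?_, ?_⟩
  · intro x hx
    rw [hAx x, rdiff]
    split_ifs with hbad
    · have hxj := hk x hx hbad
      rw [toE_le_coe_iff]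
      calc ((-q : ℝ) : Rmax) + x j ≤ ((-q : ℝ) : Rmax) + ((q + h : ℝ) : Rmax) :=
            add_le_add_right hxj _
        _ = ((h : ℝ) : Rmax) := by rw [← WithBot.coe_add]; congr 1; ring
    · rw [toE_bot]
      exact bot_le
  · rw [hAx y, hyj, ← WithBot.coe_add]
    have hBy : max (mdot (w2 k) y) 0 < ((-q + yj : ℝ) : Rmax) := by
      have h1 : mdot (w2 k) y ≤ ((h/2 : ℝ) : Rmax) := by
        rw [mdot_le_iff]
        intro i
        rw [hw2]
        simp only
        by_cases hyi : y i = ⊥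
        · rw [if_pos hyi, hyi, WithBot.add_bot]
          exact bot_le
        · rw [if_neg hyi]
          by_cases hij : i = j
          · rw [if_pos hij, WithBot.bot_add]
            exact bot_le
          · rw [if_neg hij]
            obtain ⟨s, hs⟩ := WithBot.ne_bot_iff_exists.1 hyi
            rw [← hs, Rneg_coe, ← WithBot.coe_add, ← WithBot.coe_add, WithBot.coe_le_coe]
            linarith
      refine lt_of_le_of_lt (max_le h1 ?_) ?_
      · rw [show (0 : Rmax) = ((0:ℝ) : Rmax) from rfl, WithBot.coe_le_coe]
        linarith
      · rw [WithBot.coe_lt_coe]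
        linarith
    rw [rdiff, if_pos hBy, toE_coe]
    exact_mod_cast (by linarith : h < -q + yj)


/-! ### main separation lemma -/

lemma sep_main {C : Set (Fin n → Rmax)} {y : Fin n → Rmax} (hconv : MPConvex C)
    (hcl : IsClosed C) (hy : y ∉ C) :
    ∃ (w' w'' : Fin n → Rmax) (d' d'' : Rmax) (t : EReal),
      (∀ x ∈ C, Rmax.toE (rdiff (max (mdot w' x) d') (max (mdot w'' x) d'')) ≤ t) ∧
      t < Rmax.toE (rdiff (max (mdot w' y) d') (max (mdot w'' y) d'')) := by
  rcases C.eq_empty_or_nonempty with rfl | hCne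
  · refine ⟨fun _ => ⊥, fun _ => ⊥, 0, ⊥, ⊥,
      fun x hx => absurd hx (Set.notMem_empty x), ?_⟩
    rw [mdot_bot, max_eq_right bot_le, max_eq_left bot_le]
    rw [rdiff, if_pos (show (⊥ : Rmax) < 0 from WithBot.bot_lt_coe (0:ℝ))]
    rw [show (0 : Rmax) = ((0:ℝ) : Rmax) from rfl, toE_coe]
    exact EReal.bot_lt_coe (0:ℝ)
  · rcases lt_or_eq_of_le (muC_le_zero (y := y) hCne) with hμ | hμ
    · exact caseI hcl hμ
    · by_cases hν : ∀ i, y i ≠ ⊥ → nuC C y i = y i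
      · exact absurd (mem_of_proj hconv hcl hμ hν) hy
      · push_neg at hν
        obtain ⟨j, hyj, hne⟩ := hν
        have hlt : nuC C y j < y j := lt_of_le_of_ne (nuC_le_y hCne j) hne
        obtain ⟨s, hs⟩ := WithBot.ne_bot_iff_exists.1 hyj
        exact caseII hconv hcl hμ hs.symm hlt

end RmaxAux

/-- **A subset of `ℝmax^n` is closed and max-plus convex iff it is `U`-convex
for the set `U` of residuated differences of max-plus affine functions.** -/
theorem stmt2 {n : ℕ} (C : Set (Fin n → Rmax)) :
    (MPConvex C ∧ IsClosed C) ↔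
    (∀ y, y ∉ C → ∃ (w' w'' : Fin n → Rmax) (d' d'' : Rmax),
      (⨆ x ∈ C, Rmax.toE (rdiff (max (mdot w' x) d') (max (mdot w'' x) d''))) <
        Rmax.toE (rdiff (max (mdot w' y) d') (max (mdot w'' y) d''))) := by
  constructor
  · rintro ⟨hconv, hcl⟩ y hy
    obtain ⟨w1, w2, d1, d2, t, h1, h2⟩ := RmaxAux.sep_main hconv hcl hy
    exact ⟨w1, w2, d1, d2, lt_of_le_of_lt (iSup₂_le h1) h2⟩
  · intro hU
    exact ⟨RmaxAux.convex_of_usep hU, RmaxAux.closed_of_usep hU⟩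

end
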